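/- Fix a real number N > 1 and D > 0. If h : [0,D] → [0,∞) is such that t ↦ h(t)^{1/(N−1)} is concave on [0,D] and ∫_0^D h(t) dt = 1, then h(t) ≤ 2N/D for every t ∈ [0,D]. -/

import Mathlib

open Real MeasureTheory Set

/-- Auxiliary: the bound at points `a` with `D/2 ≤ a`. -/
lemma concave_power_density_aux (N D : ℝ) (hN1 : 1 < N) (hD : 0 < D)
    (h : ℝ → ℝ) (hnn : ∀ t ∈ Set.Icc (0:ℝ) D, 0 ≤ h t)
    (hconc : ConcaveOn ℝ (Set.Icc 0 D) (fun t => h t ^ (1 / (N - 1))))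
    (hint : (∫ t in (0:ℝ)..D, h t) = 1)
    (a : ℝ) (ha : a ∈ Set.Icc (0:ℝ) D) (ha2 : D / 2 ≤ a) : h a ≤ 2 * N / D := by
  have hN0 : (0:ℝ) < N - 1 := by linarith
  have ha0 : 0 < a := lt_of_lt_of_le (by linarith) ha2
  have hha : 0 ≤ h a := hnn a ha
  have hfa : (0:ℝ) ≤ h a ^ (1 / (N - 1)) := Real.rpow_nonneg hha _
  have hInt : IntervalIntegrable h volume 0 D := by
    by_contra H
    rw [intervalIntegral.integral_undef H] at hint
    norm_num at hint
  have hsub1 : Set.uIcc (0:ℝ) a ⊆ Set.uIcc (0:ℝ) D := by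
    rw [Set.uIcc_of_le ha0.le, Set.uIcc_of_le hD.le]
    exact Set.Icc_subset_Icc le_rfl ha.2
  have hsub2 : Set.uIcc a D ⊆ Set.uIcc (0:ℝ) D := by
    rw [Set.uIcc_of_le ha.2, Set.uIcc_of_le hD.le]
    exact Set.Icc_subset_Icc ha.1 le_rfl
  have hInt1 : IntervalIntegrable h volume 0 a := hInt.mono_set hsub1
  have hInt2 : IntervalIntegrable h volume a D := hInt.mono_set hsub2
  have haNm1 : (0:ℝ) < a ^ (N - 1) := Real.rpow_pos_of_pos ha0 _
  -- pointwise bound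
  have key : ∀ s ∈ Set.Icc (0:ℝ) a, s ^ (N - 1) * (h a / a ^ (N - 1)) ≤ h s := by
    intro s hs
    have hs0 : 0 ≤ s := hs.1
    have hsa : s ≤ a := hs.2
    have hsD : s ∈ Set.Icc (0:ℝ) D := ⟨hs0, hsa.trans ha.2⟩
    have hν0 : 0 ≤ s / a := div_nonneg hs0 ha0.le
    have hμ0 : 0 ≤ 1 - s / a := by
      have : s / a ≤ 1 := (div_le_one ha0).mpr hsa
      linarith
    have hcomb := hconc.2 (show (0:ℝ) ∈ Set.Icc (0:ℝ) D from ⟨le_rfl, hD.le⟩) ha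
      hμ0 hν0 (by ring)
    have heq : (1 - s / a) • (0:ℝ) + (s / a) • a = s := by
      simp only [smul_eq_mul]
      field_simp
      ring
    rw [heq] at hcomb
    have hf0 : (0:ℝ) ≤ h 0 ^ (1 / (N - 1)) :=
      Real.rpow_nonneg (hnn 0 ⟨le_rfl, hD.le⟩) _
    have hlow : (s / a) * (h a ^ (1 / (N - 1))) ≤ h s ^ (1 / (N - 1)) := by
      have : (0:ℝ) ≤ (1 - s / a) * (h 0 ^ (1 / (N - 1))) := mul_nonneg hμ0 hf0
      simp only [smul_eq_mul] at hcomb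
      linarith
    have hlhs0 : 0 ≤ (s / a) * (h a ^ (1 / (N - 1))) := mul_nonneg hν0 hfa
    have := Real.rpow_le_rpow hlhs0 hlow (le_of_lt hN0)
    rw [Real.mul_rpow hν0 hfa] at this
    have hfs : (h s ^ (1 / (N - 1))) ^ (N - 1) = h s := by
      rw [← Real.rpow_mul (hnn s hsD), one_div,
        inv_mul_cancel₀ (ne_of_gt hN0), Real.rpow_one]
    have hfa' : (h a ^ (1 / (N - 1))) ^ (N - 1) = h a := by
      rw [← Real.rpow_mul hha, one_div,
        inv_mul_cancel₀ (ne_of_gt hN0), Real.rpow_one]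
    rw [hfs, hfa'] at this
    calc s ^ (N - 1) * (h a / a ^ (N - 1))
        = (s / a) ^ (N - 1) * h a := by
          rw [Real.div_rpow hs0 ha0.le]; ring
      _ ≤ h s := this
  -- integrability of the lower function
  have hgInt : IntervalIntegrable (fun s => s ^ (N - 1) * (h a / a ^ (N - 1)))
      volume 0 a :=
    (intervalIntegral.intervalIntegrable_rpow (Or.inl hN0.le)).mul_const _
  -- compare integrals
  have hmono : (∫ s in (0:ℝ)..a, s ^ (N - 1) * (h a / a ^ (N - 1)))
      ≤ ∫ s in (0:ℝ)..a, h s :=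
    intervalIntegral.integral_mono_on ha0.le hgInt hInt1 key
  -- compute the left integral
  have hcomp : (∫ s in (0:ℝ)..a, s ^ (N - 1) * (h a / a ^ (N - 1)))
      = h a * a / N := by
    rw [intervalIntegral.integral_mul_const, integral_rpow (Or.inl (by linarith))]
    have h0N : (0:ℝ) ^ (N - 1 + 1) = 0 := Real.zero_rpow (by linarith)
    have haN : a ^ (N - 1 + 1) = a ^ (N - 1) * a := by
      rw [Real.rpow_add ha0, Real.rpow_one]
    rw [h0N, haN]
    field_simp
    ring
  -- the right piece is nonnegative
  have htail : 0 ≤ ∫ s in a..D, h s :=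
    intervalIntegral.integral_nonneg ha.2
      (fun u hu => hnn u ⟨le_trans ha.1 hu.1, hu.2⟩)
  have hsplit : (∫ s in (0:ℝ)..a, h s) + (∫ s in a..D, h s) = 1 := by
    rw [intervalIntegral.integral_add_adjacent_intervals hInt1 hInt2]; exact hint
  have hle1 : (∫ s in (0:ℝ)..a, h s) ≤ 1 := by linarith
  have hfinal : h a * a / N ≤ 1 := by
    rw [← hcomp]; exact le_trans hmono hle1
  have hN0' : (0:ℝ) < N := by linarith
  have haa : h a * a ≤ N := by
    rw [div_le_one hN0'] at hfinal; exact hfinal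
  rw [le_div_iff₀ hD]
  nlinarith

/-- Uniform sup bound: a nonnegative function on `[0,D]` whose `1/(N-1)`-th power is
concave and which integrates to `1` satisfies `h ≤ 2N/D`. -/
theorem concave_power_density_sup_bound (N D : ℝ) (hN1 : 1 < N) (hD : 0 < D)
    (h : ℝ → ℝ) (hnn : ∀ t ∈ Set.Icc (0:ℝ) D, 0 ≤ h t)
    (hconc : ConcaveOn ℝ (Set.Icc 0 D) (fun t => h t ^ (1 / (N - 1))))
    (hint : (∫ t in (0:ℝ)..D, h t) = 1) :
    ∀ t ∈ Set.Icc (0:ℝ) D, h t ≤ 2 * N / D := by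
  intro t ht
  rcases le_total (D / 2) t with h2 | h2
  · exact concave_power_density_aux N D hN1 hD h hnn hconc hint t ht h2
  · -- reflect: apply the aux lemma to h' = h (D - ·) at the point D - t
    set h' : ℝ → ℝ := fun s => h (D - s) with hh'
    have hmem : ∀ s ∈ Set.Icc (0:ℝ) D, D - s ∈ Set.Icc (0:ℝ) D := by
      intro s hs; exact ⟨by linarith [hs.2], by linarith [hs.1]⟩
    have hnn' : ∀ s ∈ Set.Icc (0:ℝ) D, 0 ≤ h' s := fun s hs => hnn _ (hmem s hs)
    have hconc' : ConcaveOn ℝ (Set.Icc (0:ℝ) D) (fun s => h' s ^ (1 / (N - 1))) := by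
      refine ⟨convex_Icc _ _, ?_⟩
      intro x hx y hy μ ν hμ hν hμν
      have hkey : D - (μ • x + ν • y) = μ • (D - x) + ν • (D - y) := by
        simp only [smul_eq_mul]
        have : μ = 1 - ν := by linarith
        rw [this]; ring
      simp only [hh']
      rw [hkey]
      exact hconc.2 (hmem x hx) (hmem y hy) hμ hν hμν
    have hint' : (∫ s in (0:ℝ)..D, h' s) = 1 := by
      simp only [hh']
      rw [intervalIntegral.integral_comp_sub_left h D]
      simpa using hint
    have hDt : D - t ∈ Set.Icc (0:ℝ) D := hmem t ht
    have h2' : D / 2 ≤ D - t := by linarith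
    have := concave_power_density_aux N D hN1 hD h' hnn' hconc' hint' (D - t) hDt h2'
    simpa [hh'] using this
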